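/- Let X₁,…,Xₙ be i.i.d. samples from a distribution P on [d], and let E be a set of probability distributions on [d]. Then the probability that the empirical distribution of the sample lies in E is at most (n+1)^d · 2^(-n·inf_{F∈E} D(F‖P)). (Sanov's theorem, finite-alphabet upper bound.) -/

import Mathlib

open MeasureTheory Filter Finset
open scoped ENNReal

/-- `p` is a probability distribution on `Fin d`. -/
def IsProbDist {d : ℕ} (p : Fin d → ℝ) : Prop :=
  (∀ i, 0 ≤ p i) ∧ ∑ i, p i = 1

/-- Base-2 Kullback–Leibler divergence (real-valued version, meaningful when
`supp p ⊆ supp q`), with the convention `0 · log(0/q) = 0`. -/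
noncomputable def klDivReal {d : ℕ} (p q : Fin d → ℝ) : ℝ :=
  ∑ i, if p i = 0 then 0 else p i * Real.logb 2 (p i / q i)

/-- Base-2 Kullback–Leibler divergence, `+∞` when `supp p ⊄ supp q`. -/
noncomputable def klDiv {d : ℕ} (p q : Fin d → ℝ) : EReal :=
  if ∀ i, q i = 0 → p i = 0 then ((klDivReal p q : ℝ) : EReal) else ⊤

/-- Minimal nonzero entry of `p` (junk value `1` if there is none). -/
noncomputable def minPos {d : ℕ} (p : Fin d → ℝ) : ℝ :=
  if h : (Finset.univ.filter fun i => 0 < p i).Nonempty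
  then (Finset.univ.filter fun i => 0 < p i).inf' h p else 1

/-- The continuity modulus `g(p, ε) = 2 log₂(1/p_min) ε + (2√2/ln 2) √ε`. -/
noncomputable def gCont {d : ℕ} (p : Fin d → ℝ) (ε : ℝ) : ℝ :=
  2 * Real.logb 2 (1 / minPos p) * ε + (2 * Real.sqrt 2 / Real.log 2) * Real.sqrt ε

/-- The discrete measure on `Fin d` with mass `p i` at `i`. -/
noncomputable def discMeasure {d : ℕ} (p : Fin d → ℝ) : Measure (Fin d) :=
  Measure.count.withDensity fun i => ENNReal.ofReal (p i)

instance discMeasure.isFiniteMeasure {d : ℕ} (p : Fin d → ℝ) :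
    IsFiniteMeasure (discMeasure p) := by
  constructor
  rw [discMeasure, withDensity_apply _ MeasurableSet.univ,
    MeasureTheory.setLIntegral_univ, MeasureTheory.lintegral_count, tsum_fintype]
  exact ENNReal.sum_lt_top.mpr fun i _ => ENNReal.ofReal_lt_top

/-- The law of `n` i.i.d. samples from `p`. -/
noncomputable def iidMeasure {d : ℕ} (p : Fin d → ℝ) (n : ℕ) :
    Measure (Fin n → Fin d) :=
  Measure.pi fun _ => discMeasure p

/-- The empirical distribution of the sample `x`. -/
noncomputable def empDist {d n : ℕ} (x : Fin n → Fin d) : Fin d → ℝ :=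
  fun i => ((Finset.univ.filter fun j => x j = i).card : ℝ) / n

/-- ℓ¹ distance between two vectors on `Fin d`. -/
noncomputable def l1Dist {d : ℕ} (p q : Fin d → ℝ) : ℝ :=
  ∑ i, |p i - q i|


private lemma discMeasure_singleton {d : ℕ} (p : Fin d → ℝ) (i : Fin d) :
    discMeasure p {i} = ENNReal.ofReal (p i) := by
  rw [discMeasure, withDensity_apply _ (measurableSet_singleton i),
    MeasureTheory.lintegral_singleton, Measure.count_singleton, mul_one]

private lemma iidMeasure_singleton {d n : ℕ} (p : Fin d → ℝ) (x : Fin n → Fin d) :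
    iidMeasure p n {x} = ∏ j, ENNReal.ofReal (p (x j)) := by
  rw [iidMeasure, ← Set.univ_pi_singleton x, Measure.pi_pi]
  exact Finset.prod_congr rfl fun j _ => discMeasure_singleton p (x j)

private lemma prod_pow_count {d n : ℕ} (f : Fin d → ℝ) (x : Fin n → Fin d) :
    ∏ j, f (x j) = ∏ i, f i ^ (Finset.univ.filter fun j => x j = i).card := by
  classical
  rw [← Finset.prod_fiberwise' Finset.univ x f]
  exact Finset.prod_congr rfl fun i _ => Finset.prod_const _

private lemma prod_P_eq {d n : ℕ} (hn : 0 < n) (P : Fin d → ℝ) (hP0 : ∀ i, 0 ≤ P i)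
    (x : Fin n → Fin d) (h : ∀ i, P i = 0 → empDist x i = 0) :
    ∏ j, P (x j) =
      (∏ j, empDist x (x j)) *
        Real.exp ((-(n : ℝ) * Real.log 2) * klDivReal (empDist x) P) := by
  classical
  have hnR : (n : ℝ) ≠ 0 := Nat.cast_ne_zero.mpr hn.ne'
  have h2 : Real.log 2 ≠ 0 := (Real.log_pos (by norm_num)).ne'
  rw [prod_pow_count P x, prod_pow_count (empDist x) x, klDivReal, Finset.mul_sum,
    Real.exp_sum, ← Finset.prod_mul_distrib]
  refine Finset.prod_congr rfl fun i _ => ?_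
  set c := (Finset.univ.filter fun j => x j = i).card with hc
  have hQi : empDist x i = (c : ℝ) / n := rfl
  by_cases hQ0 : empDist x i = 0
  · have hc0 : c = 0 := by
      have := hQ0
      rw [hQi, div_eq_zero_iff] at this
      exact_mod_cast this.resolve_right hnR
    simp [hQ0, hc0]
  · have hcne : (c : ℝ) ≠ 0 := by
      intro hc0
      exact hQ0 (by rw [hQi, hc0, zero_div])
    have hcpos : (0 : ℝ) < c := lt_of_le_of_ne (Nat.cast_nonneg c) (Ne.symm hcne)
    have hQpos : 0 < empDist x i := by rw [hQi]; positivity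
    have hPne : P i ≠ 0 := fun h0 => hQ0 (h i h0)
    have hPpos : 0 < P i := lt_of_le_of_ne (hP0 i) (Ne.symm hPne)
    have hnQ : (n : ℝ) * empDist x i = c := by rw [hQi]; field_simp
    rw [if_neg hQ0]
    set Q := empDist x i with hQdef
    set L := Real.logb 2 (Q / P i) with hL
    have hL' : L = Real.log (Q / P i) / Real.log 2 := rfl
    have hlog : -(n : ℝ) * Real.log 2 * (Q * L) = (c : ℝ) * Real.log (P i / Q) := by
      have hswap : Real.log (P i / Q) = - Real.log (Q / P i) := by
        rw [← Real.log_inv, inv_div]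
      rw [hswap, hL']
      field_simp
      linear_combination -Real.log (Q / P i) * hnQ
    rw [hlog, Real.exp_nat_mul, Real.exp_log (div_pos hPpos hQpos), ← mul_pow,
      mul_comm Q (P i / Q), div_mul_cancel₀ _ (ne_of_gt hQpos)]

private lemma sum_prod_le_one {d n : ℕ} (Q : Fin d → ℝ) (hQ : IsProbDist Q) :
    ∑ x : Fin n → Fin d, ∏ j, ENNReal.ofReal (Q (x j)) = 1 := by
  rw [(Fintype.sum_pow (fun i => ENNReal.ofReal (Q i)) n).symm,
    ← ENNReal.ofReal_sum_of_nonneg (fun i _ => hQ.1 i), hQ.2, ENNReal.ofReal_one, one_pow]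

set_option maxHeartbeats 1000000 in
private lemma sum_mass_le {d n : ℕ} (S : Finset (Fin n → Fin d))
    (hSE : ∀ x ∈ S, IsProbDist (empDist x)) :
    ∑ x ∈ S, ∏ j, ENNReal.ofReal (empDist x (x j)) ≤ ((n + 1 : ℝ≥0∞)) ^ d := by
  classical
  have hcardle : ∀ (x : Fin n → Fin d) (i : Fin d),
      (Finset.univ.filter fun j => x j = i).card < n + 1 :=
    fun x i => Nat.lt_succ_of_le ((Finset.card_filter_le _ _).trans_eq (by simp))
  set g : (Fin n → Fin d) → (Fin d → Fin (n + 1)) := fun x i =>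
    ⟨(Finset.univ.filter fun j => x j = i).card, hcardle x i⟩ with hg
  rw [← Finset.sum_fiberwise S g (fun x => ∏ j, ENNReal.ofReal (empDist x (x j)))]
  have hbound : ∀ t : Fin d → Fin (n + 1),
      ∑ x ∈ S.filter (fun x => g x = t), ∏ j, ENNReal.ofReal (empDist x (x j)) ≤ 1 := by
    intro t
    rcases (S.filter (fun x => g x = t)).eq_empty_or_nonempty with he | ⟨x₀, hx₀⟩
    · simp [he]
    · have hx₀S : x₀ ∈ S := (Finset.mem_filter.mp hx₀).1
      have hx₀t : g x₀ = t := (Finset.mem_filter.mp hx₀).2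
      have hQ := hSE _ hx₀S
      have hsame : ∀ x ∈ S.filter (fun x => g x = t), empDist x = empDist x₀ := by
        intro x hx
        have hxt : g x = t := (Finset.mem_filter.mp hx).2
        funext i
        have hcc : ((Finset.univ.filter fun j => x j = i).card) =
            ((Finset.univ.filter fun j => x₀ j = i).card) :=
          congrArg Fin.val (congrFun (hxt.trans hx₀t.symm) i)
        show ((Finset.univ.filter fun j => x j = i).card : ℝ) / n =
          ((Finset.univ.filter fun j => x₀ j = i).card : ℝ) / n
        rw [hcc]
      calc ∑ x ∈ S.filter (fun x => g x = t), ∏ j, ENNReal.ofReal (empDist x (x j))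
          = ∑ x ∈ S.filter (fun x => g x = t), ∏ j, ENNReal.ofReal (empDist x₀ (x j)) :=
            Finset.sum_congr rfl fun x hx => by rw [hsame x hx]
        _ ≤ ∑ x : Fin n → Fin d, ∏ j, ENNReal.ofReal (empDist x₀ (x j)) :=
            Finset.sum_le_sum_of_subset (Finset.subset_univ _)
        _ = 1 := sum_prod_le_one _ hQ
  calc ∑ t : Fin d → Fin (n + 1),
        ∑ x ∈ S.filter (fun x => g x = t), ∏ j, ENNReal.ofReal (empDist x (x j))
      ≤ ∑ _t : Fin d → Fin (n + 1), (1 : ℝ≥0∞) := Finset.sum_le_sum fun t _ => hbound t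
    _ = (Fintype.card (Fin d → Fin (n + 1)) : ℝ≥0∞) := by simp
    _ = ((n + 1 : ℝ≥0∞)) ^ d := by
        rw [Fintype.card_fun]
        push_cast
        simp


/-- Sanov's theorem, finite-alphabet upper bound:
`Pr[P̂ₙ ∈ E] ≤ (n+1)^d · 2^(-n · inf_{F ∈ E} D(F‖P))`.
(Here `2^y = EReal.exp (y ln 2)` encodes the base-2 exponential.) -/
theorem sanov_upper_bound {d : ℕ} (P : Fin d → ℝ) (hP : IsProbDist P)
    (E : Set (Fin d → ℝ)) (hE : ∀ F ∈ E, IsProbDist F) (n : ℕ) :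
    iidMeasure P n {x | empDist x ∈ E} ≤
      ((n + 1 : ℝ≥0∞)) ^ d *
        EReal.exp ((((-(n : ℝ)) * Real.log 2 : ℝ) : EReal) * ⨅ F ∈ E, klDiv F P) := by
  classical
  rcases Nat.eq_zero_or_pos n with hn | hn
  · subst hn
    have hempty : {x : Fin 0 → Fin d | empDist x ∈ E} = ∅ := by
      ext x
      simp only [Set.mem_setOf_eq, Set.mem_empty_iff_false, iff_false]
      intro hx
      have h1 := (hE _ hx).2
      have hz : ∀ i, empDist x i = 0 := fun i => by
        show ((Finset.univ.filter fun j => x j = i).card : ℝ) / ((0 : ℕ) : ℝ) = 0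
        simp
      rw [Finset.sum_congr rfl fun i _ => hz i] at h1
      simp at h1
    rw [hempty]
    simp
  set k : ℝ := (-(n : ℝ)) * Real.log 2 with hk
  have hkneg : k < 0 := by
    have h2 : (0 : ℝ) < Real.log 2 := Real.log_pos (by norm_num)
    have hn' : (0 : ℝ) < n := by exact_mod_cast hn
    rw [hk]; nlinarith
  set I : EReal := ⨅ F ∈ E, klDiv F P with hI
  set S : Finset (Fin n → Fin d) := Finset.univ.filter (fun x => empDist x ∈ E) with hS
  have hSsub : {x : Fin n → Fin d | empDist x ∈ E} ⊆ ⋃ x ∈ S, {x} := by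
    intro x hx
    simp only [Set.mem_iUnion, Set.mem_singleton_iff]
    exact ⟨x, Finset.mem_filter.mpr ⟨Finset.mem_univ x, hx⟩, rfl⟩
  have h1 : iidMeasure P n {x | empDist x ∈ E} ≤
      ∑ x ∈ S, ∏ j, ENNReal.ofReal (P (x j)) := by
    refine (measure_mono hSsub).trans ((measure_biUnion_finset_le S _).trans ?_)
    exact le_of_eq (Finset.sum_congr rfl fun x _ => iidMeasure_singleton P x)
  have hemp0 : ∀ (x : Fin n → Fin d) (i : Fin d), 0 ≤ empDist x i := by
    intro x i
    show (0 : ℝ) ≤ ((Finset.univ.filter fun j => x j = i).card : ℝ) / n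
    positivity
  have key : ∀ x ∈ S, (∏ j, ENNReal.ofReal (P (x j))) ≤
      (∏ j, ENNReal.ofReal (empDist x (x j))) * EReal.exp ((k : EReal) * I) := by
    intro x hxS
    have hxE : empDist x ∈ E := (Finset.mem_filter.mp hxS).2
    by_cases hsupp : ∀ i, P i = 0 → empDist x i = 0
    · have hD : klDiv (empDist x) P = ((klDivReal (empDist x) P : ℝ) : EReal) :=
        if_pos hsupp
      have hIle : I ≤ ((klDivReal (empDist x) P : ℝ) : EReal) := by
        rw [hI, ← hD]; exact iInf₂_le _ hxE
      set D : ℝ := klDivReal (empDist x) P with hDdef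
      have hle : ((k * D : ℝ) : EReal) ≤ (k : EReal) * I := by
        by_cases hIbot : I = ⊥
        · rw [hIbot, EReal.coe_mul_bot_of_neg hkneg]; exact le_top
        · have hInt : I ≠ ⊤ := fun h => by
            rw [h] at hIle
            exact (EReal.coe_ne_top D) (top_le_iff.mp hIle)
          obtain ⟨r, hIr⟩ : ∃ r : ℝ, I = (r : EReal) :=
            ⟨I.toReal, (EReal.coe_toReal hInt hIbot).symm⟩
          have hrD : r ≤ D := by
            rw [hIr] at hIle
            exact_mod_cast hIle
          rw [hIr, ← EReal.coe_mul, EReal.coe_le_coe_iff]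
          exact mul_le_mul_of_nonpos_left hrD hkneg.le
      calc ∏ j, ENNReal.ofReal (P (x j))
          = ENNReal.ofReal (∏ j, P (x j)) :=
            (ENNReal.ofReal_prod_of_nonneg fun j _ => hP.1 _).symm
        _ = ENNReal.ofReal ((∏ j, empDist x (x j)) * Real.exp (k * D)) := by
            rw [prod_P_eq hn P hP.1 x hsupp]
        _ = ENNReal.ofReal (∏ j, empDist x (x j)) * ENNReal.ofReal (Real.exp (k * D)) :=
            ENNReal.ofReal_mul (Finset.prod_nonneg fun j _ => hemp0 x (x j))
        _ = (∏ j, ENNReal.ofReal (empDist x (x j))) * EReal.exp ((k * D : ℝ) : EReal) := by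
            rw [ENNReal.ofReal_prod_of_nonneg fun j _ => hemp0 x (x j), EReal.exp_coe]
        _ ≤ _ := mul_le_mul_right (EReal.exp_monotone hle) _
    · push_neg at hsupp
      obtain ⟨i, hPi, hQi⟩ := hsupp
      have hj : ∃ j, x j = i := by
        by_contra hc
        push_neg at hc
        apply hQi
        show ((Finset.univ.filter fun j => x j = i).card : ℝ) / n = 0
        rw [Finset.filter_eq_empty_iff.mpr fun j _ => hc j]
        simp
      obtain ⟨j0, hj0⟩ := hj
      have hz : ∏ j, ENNReal.ofReal (P (x j)) = 0 :=
        Finset.prod_eq_zero (Finset.mem_univ j0) (by rw [hj0, hPi]; simp)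
      rw [hz]
      exact zero_le
  calc iidMeasure P n {x | empDist x ∈ E}
      ≤ ∑ x ∈ S, ∏ j, ENNReal.ofReal (P (x j)) := h1
    _ ≤ ∑ x ∈ S, (∏ j, ENNReal.ofReal (empDist x (x j))) * EReal.exp ((k : EReal) * I) :=
        Finset.sum_le_sum key
    _ = (∑ x ∈ S, ∏ j, ENNReal.ofReal (empDist x (x j))) * EReal.exp ((k : EReal) * I) :=
        (Finset.sum_mul _ _ _).symm
    _ ≤ ((n + 1 : ℝ≥0∞)) ^ d * EReal.exp ((k : EReal) * I) :=
        mul_le_mul_left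
          (sum_mass_le S fun x hx => hE _ ((Finset.mem_filter.mp hx).2)) _
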